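/- Let n ≥ 1 and let p and q be nonzero polynomials in n variables over ℂ (elements of MvPolynomial (Fin n) ℂ). For a nonzero polynomial h, define its Newton polytope N(h) = convexHull ℝ { (J : ℝⁿ) : the coefficient of z^J in h is nonzero }, where multi-indices J ∈ ℕⁿ are regarded as points of ℝⁿ. Then N(p·q) = N(p) + N(q), the right-hand side being the Minkowski sum {x + y : x ∈ N(p), y ∈ N(q)}. -/

import Mathlib

open Pointwise

/-- The Newton polytope of a polynomial `h` in `n` variables: the convex hull in
`ℝⁿ` of the exponent multi-indices of the monomials occurring in `h`. -/
noncomputable def newtonPolytope {n : ℕ} (h : MvPolynomial (Fin n) ℂ) : Set (Fin n → ℝ) :=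
  convexHull ℝ {x : Fin n → ℝ | ∃ J ∈ h.support, x = fun i => (J i : ℝ)}

set_option maxHeartbeats 1000000 in
/-- **Multiplicativity of the Newton polytope:** for nonzero polynomials `p`, `q`
in `n` variables over `ℂ`, the Newton polytope of the product is the Minkowski
sum of the Newton polytopes: `N(p·q) = N(p) + N(q)`. -/
theorem newtonPolytope_mul (n : ℕ) (hn : 1 ≤ n)
    (p q : MvPolynomial (Fin n) ℂ) (hp : p ≠ 0) (hq : q ≠ 0) :
    newtonPolytope (p * q) = newtonPolytope p + newtonPolytope q := by
  set e : (Fin n →₀ ℕ) → (Fin n → ℝ) := fun J i => (J i : ℝ) with he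
  have einj : Function.Injective e := by
    intro a b h
    ext i
    have := congrFun h i
    simp only [he] at this
    exact_mod_cast this
  have eadd : ∀ a b, e (a + b) = e a + e b := by
    intro a b
    funext i
    simp [he]
  have hset : ∀ h : MvPolynomial (Fin n) ℂ,
      {x : Fin n → ℝ | ∃ J ∈ h.support, x = fun i => (J i : ℝ)} = e '' ↑h.support := by
    intro h
    ext x
    simp only [Set.mem_setOf_eq, Set.mem_image, Finset.mem_coe]
    constructor
    · rintro ⟨J, hJ, rfl⟩; exact ⟨J, hJ, rfl⟩
    · rintro ⟨J, hJ, rfl⟩; exact ⟨J, hJ, rfl⟩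
  have key : ∀ h : MvPolynomial (Fin n) ℂ,
      newtonPolytope h = convexHull ℝ (e '' ↑h.support) := by
    intro h; rw [newtonPolytope, hset]
  have himg : ∀ (s t : Set (Fin n →₀ ℕ)), e '' (s + t) = e '' s + e '' t := by
    intro s t
    ext x
    constructor
    · rintro ⟨y, ⟨a, ha, b, hb, rfl⟩, rfl⟩
      exact ⟨e a, Set.mem_image_of_mem _ ha, e b, Set.mem_image_of_mem _ hb, (eadd a b).symm⟩
    · rintro ⟨x', ⟨a, ha, rfl⟩, y', ⟨b, hb, rfl⟩, rfl⟩
      exact ⟨a + b, ⟨a, ha, b, hb, rfl⟩, eadd a b⟩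
  rw [key, key, key, ← convexHull_add, ← himg]
  -- the candidate big set
  set S : Set (Fin n →₀ ℕ) := ↑p.support + ↑q.support with hS
  have hSfin : (e '' S).Finite := by
    have : S = ↑(p.support + q.support) := by rw [Finset.coe_add]
    rw [this]
    exact ((p.support + q.support).finite_toSet).image e
  apply le_antisymm
  · apply convexHull_mono
    apply Set.image_mono
    have := MvPolynomial.support_mul p q
    intro x hx
    have hx' := this hx
    rw [hS, ← Finset.coe_add]
    exact_mod_cast hx'
  · -- hard direction via extreme points
    set K := convexHull ℝ (e '' S) with hK
    have hcomp : IsCompact K := hSfin.isCompact_convexHull ℝ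
    have hconv : Convex ℝ K := convex_convexHull ℝ _
    -- every extreme point of K lies in the support of p*q
    have hext : K.extremePoints ℝ ⊆ e '' ↑(p * q).support := by
      intro v hv
      have hvS : v ∈ e '' S := extremePoints_convexHull_subset hv
      obtain ⟨c, hc, rfl⟩ := hvS
      obtain ⟨a, ha, b, hb, rfl⟩ := hc
      refine ⟨a + b, ?_, rfl⟩
      rw [Finset.mem_coe, MvPolynomial.mem_support_iff, MvPolynomial.coeff_mul]
      have hsingle : ∑ x ∈ Finset.HasAntidiagonal.antidiagonal (a + b),
          MvPolynomial.coeff x.1 p * MvPolynomial.coeff x.2 q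
          = MvPolynomial.coeff a p * MvPolynomial.coeff b q := by
        apply Finset.sum_eq_single_of_mem (a, b) (Finset.HasAntidiagonal.mem_antidiagonal.mpr rfl)
        rintro ⟨a', b'⟩ hab' hne
        rw [Finset.HasAntidiagonal.mem_antidiagonal] at hab'
        by_contra hcon
        have ha' : a' ∈ p.support := by
          rw [MvPolynomial.mem_support_iff]
          intro h0; apply hcon; rw [h0, zero_mul]
        have hb' : b' ∈ q.support := by
          rw [MvPolynomial.mem_support_iff]
          intro h0; apply hcon; rw [h0, mul_zero]
        -- e (a + b') and e (a' + b) lie in e '' S ⊆ K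
        have hx : e (a + b') ∈ K := by
          apply subset_convexHull ℝ _
          exact ⟨a + b', ⟨a, ha, b', hb', rfl⟩, rfl⟩
        have hy : e (a' + b) ∈ K := by
          apply subset_convexHull ℝ _
          exact ⟨a' + b, ⟨a', ha', b, hb, rfl⟩, rfl⟩
        -- e (a+b) is the midpoint of these two
        have hsum : e (a + b') + e (a' + b) = e (a + b) + e (a + b) := by
          rw [← eadd, ← eadd]
          congr 1
          rw [show (a + b') + (a' + b) = (a + b) + (a' + b') by abel, hab']
        have hmid : e (a + b) ∈ openSegment ℝ (e (a + b')) (e (a' + b)) := by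
          refine ⟨1/2, 1/2, by norm_num, by norm_num, by norm_num, ?_⟩
          have : (1/2 : ℝ) • (e (a + b') + e (a' + b))
              = (1/2 : ℝ) • (e (a + b) + e (a + b)) := by rw [hsum]
          rw [smul_add, smul_add] at this
          rw [this, ← smul_add, ← two_smul ℝ, smul_smul]
          norm_num
        obtain ⟨-, heq⟩ := mem_extremePoints.mp hv
        obtain ⟨h1, h2⟩ := heq _ hx _ hy hmid
        have hb'' : b' = b := by
          have := einj h1
          exact add_left_cancel this
        have ha'' : a' = a := by
          have := einj h2
          exact add_right_cancel this
        exact hne (by rw [ha'', hb''])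
      rw [hsingle]
      exact mul_ne_zero (MvPolynomial.mem_support_iff.mp ha)
        (MvPolynomial.mem_support_iff.mp hb)
    -- Krein–Milman
    have hKM := closure_convexHull_extremePoints hcomp hconv
    calc K = closure (convexHull ℝ (K.extremePoints ℝ)) := hKM.symm
      _ ⊆ closure (convexHull ℝ (e '' ↑(p * q).support)) := by
          apply closure_mono; exact convexHull_mono hext
      _ = convexHull ℝ (e '' ↑(p * q).support) := by
          apply IsClosed.closure_eq
          exact (((p * q).support.finite_toSet).image e).isClosed_convexHull ℝ
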